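/- For the admission-control MDP with value iteration defined by V_0(x,ℓ)=0 and V_{n+1}(x,ℓ)=min{Q_{n+1}(x,ℓ,0), Q_{n+1}(x,ℓ,1)}, where Q_{n+1}(x,ℓ,0) = (1/(α+ν))(h·max(x−k,0) + c(ℓ)) + β[δ(x)·Σ_{r=1}^{R} P(r)·V_n(min(x+1,X), min(ℓ+r,L)) + (1−δ(x))·Σ_{r=1}^{R} P(r)·V_n(max(x−1,0), max(ℓ−r,0))] and Q_{n+1}(x,ℓ,1) = (1/(α+ν))(h·max(x−k,0) + c(ℓ) + p(ℓ)) + β(1−δ(x))·Σ_{r=1}^{R} P(r)·V_n(max(x−1,0), max(ℓ−r,0)), if the holding/penalty functions c and p are weakly increasing in ℓ, then for every n ≥ 0 and every fixed x ∈ {0,...,X}, the function ℓ ↦ V_n(x,ℓ) is weakly increasing on {0,...,L}. -/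
import Mathlib


open Finset

/-- Proposition 1 (induction step / Lemma 1): the value-iteration iterates
`V_n(x, ℓ)` of the admission-control MDP are weakly increasing in the load `ℓ`. -/
theorem stmt_0
    (X L R k : ℕ) (lam mu alpha nu h beta : ℝ)
    (c p P : ℕ → ℝ)
    (hlam : 0 < lam) (hmu : 0 < mu) (halpha : 0 < alpha) (hnu : 0 < nu)
    (hh : 0 ≤ h) (hbeta0 : 0 ≤ beta) (hbeta1 : beta < 1)
    (hc : Monotone c) (hp : Monotone p)
    (hc0 : ∀ ℓ, 0 ≤ c ℓ) (hp0 : ∀ ℓ, 0 ≤ p ℓ)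
    (hP : ∀ r, 0 ≤ P r) (hPsum : ∑ r ∈ Finset.Icc 1 R, P r = 1)
    (δ : ℕ → ℝ) (hδ : ∀ x, δ x = lam / (lam + (min k x : ℕ) * mu))
    (V : ℕ → ℕ → ℕ → ℝ) (Q : ℕ → ℕ → ℕ → Fin 2 → ℝ)
    (hV0 : ∀ x ℓ, V 0 x ℓ = 0)
    (hQ0 : ∀ n x ℓ, Q (n+1) x ℓ 0 =
      (1 / (alpha + nu)) * (h * ((x - k : ℕ) : ℝ) + c ℓ)
      + beta * (δ x * ∑ r ∈ Finset.Icc 1 R, P r * V n (min (x+1) X) (min (ℓ+r) L)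
        + (1 - δ x) * ∑ r ∈ Finset.Icc 1 R, P r * V n (x-1) (ℓ-r)))
    (hQ1 : ∀ n x ℓ, Q (n+1) x ℓ 1 =
      (1 / (alpha + nu)) * (h * ((x - k : ℕ) : ℝ) + c ℓ + p ℓ)
      + beta * (1 - δ x) * ∑ r ∈ Finset.Icc 1 R, P r * V n (x-1) (ℓ-r))
    (hVsucc : ∀ n x ℓ, V (n+1) x ℓ = min (Q (n+1) x ℓ 0) (Q (n+1) x ℓ 1)) :
    ∀ n x ℓ₁ ℓ₂, x ≤ X → ℓ₁ ≤ ℓ₂ → ℓ₂ ≤ L → V n x ℓ₁ ≤ V n x ℓ₂ := by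
  intro n
  induction n with
  | zero => intro x ℓ₁ ℓ₂ _ _ _; simp [hV0]
  | succ n ih =>
    intro x ℓ₁ ℓ₂ hx h12 h2L
    have hδ0 : 0 ≤ δ x := by
      rw [hδ]
      positivity
    have hδ1 : δ x ≤ 1 := by
      rw [hδ]
      rw [div_le_one (by positivity)]
      nlinarith [mul_nonneg (Nat.cast_nonneg (min k x)) hmu.le]
    have hk : (0:ℝ) ≤ 1 / (alpha + nu) := by positivity
    have hS1 : ∑ r ∈ Finset.Icc 1 R, P r * V n (min (x+1) X) (min (ℓ₁+r) L)
        ≤ ∑ r ∈ Finset.Icc 1 R, P r * V n (min (x+1) X) (min (ℓ₂+r) L) := by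
      apply Finset.sum_le_sum
      intro r _
      exact mul_le_mul_of_nonneg_left
        (ih (min (x+1) X) (min (ℓ₁+r) L) (min (ℓ₂+r) L) (min_le_right _ _)
          (min_le_min (Nat.add_le_add_right h12 r) le_rfl) (min_le_right _ _)) (hP r)
    have hS2 : ∑ r ∈ Finset.Icc 1 R, P r * V n (x-1) (ℓ₁-r)
        ≤ ∑ r ∈ Finset.Icc 1 R, P r * V n (x-1) (ℓ₂-r) := by
      apply Finset.sum_le_sum
      intro r _
      exact mul_le_mul_of_nonneg_left
        (ih (x-1) (ℓ₁-r) (ℓ₂-r) (le_trans (Nat.sub_le x 1) hx)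
          (Nat.sub_le_sub_right h12 r) (le_trans (Nat.sub_le ℓ₂ r) h2L)) (hP r)
    rw [hVsucc, hVsucc]
    apply min_le_min
    · rw [hQ0, hQ0]
      have := mul_le_mul_of_nonneg_left hS1 hδ0
      have := mul_le_mul_of_nonneg_left hS2 (by linarith : (0:ℝ) ≤ 1 - δ x)
      have hcle := hc h12
      nlinarith
    · rw [hQ1, hQ1]
      have := mul_le_mul_of_nonneg_left hS2 (by linarith : (0:ℝ) ≤ 1 - δ x)
      have hcle := hc h12
      have hple := hp h12
      nlinarith
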